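/- Let f, m₁, δ, a, b, β be real numbers with f > 0, m₁ > δf ≥ 0, b > 0, a ≥ 0, β > 0, and 2m₁f − δf² ≥ β. Set θ = af − b(m₁ − δf). If θ ≥ 0, then 0 ≤ bβ/f ≤ af + bm₁ and 0 ≤ bβ/f + θ ≤ af + bm₁. If θ < 0, then 0 ≤ (a + bδ)β/m₁ ≤ af + bm₁ and 0 ≤ (aβ − θm₁)/(m₁ − δf) ≤ af + bm₁. -/
import Mathlib


theorem stmt_14 (f m₁ δ a b β : ℝ) (hf : 0 < f) (hδ : 0 ≤ δ*f) (hm : δ*f < m₁)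
    (hb : 0 < b) (ha : 0 ≤ a) (hβ : 0 < β)
    (hnpi : 2*m₁*f - δ*f^2 ≥ β) :
    (a*f - b*(m₁ - δ*f) ≥ 0 →
      (0 ≤ b*β/f ∧ b*β/f ≤ a*f + b*m₁) ∧
      (0 ≤ b*β/f + (a*f - b*(m₁ - δ*f)) ∧
        b*β/f + (a*f - b*(m₁ - δ*f)) ≤ a*f + b*m₁)) ∧
    (a*f - b*(m₁ - δ*f) < 0 →
      (0 ≤ (a + b*δ)*β/m₁ ∧ (a + b*δ)*β/m₁ ≤ a*f + b*m₁) ∧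
      (0 ≤ (a*β - (a*f - b*(m₁ - δ*f))*m₁)/(m₁ - δ*f) ∧
        (a*β - (a*f - b*(m₁ - δ*f))*m₁)/(m₁ - δ*f) ≤ a*f + b*m₁)) := by
  have hm₁ : 0 < m₁ := lt_of_le_of_lt hδ hm
  have hmd : 0 < m₁ - δ*f := by linarith
  have hδ' : 0 ≤ δ := nonneg_of_mul_nonneg_right (by linarith [hδ] : (0:ℝ) ≤ f*δ) hf
  constructor
  · intro hθ
    have h1 : 0 ≤ b*β/f := div_nonneg (by positivity) hf.le
    have h2 : b*β/f + (a*f - b*(m₁ - δ*f)) ≤ a*f + b*m₁ := by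
      rw [← sub_nonneg]
      have : b*β/f ≤ b*(2*m₁ - δ*f) := by
        rw [div_le_iff₀ hf]; nlinarith
      nlinarith
    refine ⟨⟨h1, by linarith⟩, ⟨by linarith, h2⟩⟩
  · intro hθ
    have k1 : 0 ≤ (a + b*δ)*β/m₁ := div_nonneg (by positivity) hm₁.le
    have k2 : (a + b*δ)*β/m₁ ≤ a*f + b*m₁ := by
      rw [div_le_iff₀ hm₁]
      nlinarith [mul_nonneg (mul_nonneg ha hδ') (sq_nonneg f),
        mul_le_mul_of_nonneg_left hnpi ha,
        mul_le_mul_of_nonneg_left hnpi (mul_nonneg hb.le hδ')]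
    have k3 : 0 ≤ (a*β - (a*f - b*(m₁ - δ*f))*m₁)/(m₁ - δ*f) := by
      apply div_nonneg _ hmd.le
      nlinarith [mul_nonneg ha hβ.le]
    have k4 : (a*β - (a*f - b*(m₁ - δ*f))*m₁)/(m₁ - δ*f) ≤ a*f + b*m₁ := by
      rw [div_le_iff₀ hmd]
      nlinarith [mul_le_mul_of_nonneg_left hnpi ha]
    exact ⟨⟨k1, k2⟩, ⟨k3, k4⟩⟩
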